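/- arXiv:1509.01039 — 2 statements merged into one kernel-verified Lean document; each statement's English description precedes it below -/
import Mathlib

section
/- Let (U, γ) be a free bilinear R-module with orthogonal decomposition U = ⊥_{i∈I} U_i, (V, q) a free quadratic R-module, and b a balanced companion of q. Then U ⊗_b V = ⊥_{i∈I} (U_i ⊗_b V) as quadratic modules, where U ⊗_b V carries the quadratic form γ ⊗_b q. -/
open TensorProduct

/-- `q` is quasilinear on `S × T`. -/
def QlinOn {R : Type*} [CommSemiring R] {V : Type*} [AddCommMonoid V] [Module R V]
    (q : V → R) (S T : Set V) : Prop :=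
  ∀ x ∈ S, ∀ y ∈ T, q (x + y) = q x + q y

/-- `V` is the internal direct sum of the family of submodules `W i`. -/
def IsInternalSum {R : Type*} [CommSemiring R] {V : Type*} [AddCommMonoid V] [Module R V]
    {ι : Type*} (W : ι → Submodule R V) : Prop :=
  ∀ x : V, ∃! c : ι →₀ V, (∀ i, c i ∈ W i) ∧ x = c.sum fun _ v => v

/-- If the free bilinear module `(U, γ)` has an orthogonal decomposition
`U = ⊥_{i∈I} U_i`, `(V, q)` is a free quadratic module and `b` a balanced companion of `q`,
then `U ⊗_b V = ⊥_{i∈I} (U_i ⊗_b V)` as quadratic modules, where the quadratic form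
`γ ⊗_b q` is induced by `γ ⊗ B` for an expansion `B` of `(q, b)`. -/
theorem tensor_orth_decomposition {R : Type*} [CommSemiring R]
    {U V : Type*} [AddCommMonoid U] [Module R U] [AddCommMonoid V] [Module R V]
    [Module.Free R U] [Module.Free R V]
    (γ : U →ₗ[R] U →ₗ[R] R) (hγ : ∀ u u', γ u u' = γ u' u)
    (q : V → R) (b : V →ₗ[R] V →ₗ[R] R)
    (hqsmul : ∀ (a : R) (x : V), q (a • x) = a * a * q x)
    (hbsymm : ∀ x y, b x y = b y x)
    (hcomp : ∀ x y, q (x + y) = q x + q y + b x y)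
    (hbal : ∀ x, b x x = 2 * q x)
    (B : V →ₗ[R] V →ₗ[R] R)
    (hBexp : ∀ x y, B x y + B y x = b x y) (hBq : ∀ x, B x x = q x)
    (G : U ⊗[R] V →ₗ[R] U ⊗[R] V →ₗ[R] R)
    (hG : ∀ (u₁ u₂ : U) (v₁ v₂ : V),
      G (u₁ ⊗ₜ[R] v₁) (u₂ ⊗ₜ[R] v₂) = γ u₁ u₂ * B v₁ v₂)
    (tq : U ⊗[R] V → R) (htq : ∀ z, tq z = G z z)
    {ι : Type*} (Usub : ι → Submodule R U)
    (horth : ∀ i j, i ≠ j → Usub i ⊓ Usub j = ⊥ ∧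
      ∀ x ∈ Usub i, ∀ y ∈ Usub j, γ x y = 0)
    (hsum : IsInternalSum Usub)
    (W : ι → Submodule R (U ⊗[R] V))
    (hW : ∀ i, W i = Submodule.span R {z | ∃ u ∈ Usub i, ∃ v : V, z = u ⊗ₜ[R] v}) :
    (∀ i j, i ≠ j → W i ⊓ W j = ⊥ ∧ QlinOn tq (W i : Set (U ⊗[R] V)) (W j : Set (U ⊗[R] V))) ∧
      IsInternalSum W := by
  classical
  -- The decomposition map `c : U → (ι →₀ U)` and its properties
  set c : U → (ι →₀ U) := fun x => (hsum x).choose with hc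
  have hc_mem : ∀ x i, c x i ∈ Usub i := fun x => (hsum x).choose_spec.1.1
  have hc_sum : ∀ x, x = (c x).sum fun _ v => v := fun x => (hsum x).choose_spec.1.2
  have hc_uniq : ∀ x (d : ι →₀ U), (∀ i, d i ∈ Usub i) → x = (d.sum fun _ v => v) →
      d = c x := fun x d h1 h2 => (hsum x).choose_spec.2 d ⟨h1, h2⟩
  -- linearity of `c`
  have hc_add : ∀ x y, c (x + y) = c x + c y := by
    intro x y
    refine (hc_uniq (x + y) (c x + c y) (fun i => ?_) ?_).symm
    · exact add_mem (hc_mem x i) (hc_mem y i)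
    · rw [Finsupp.sum_add_index' (fun _ => rfl) (fun _ _ _ => rfl)]
      exact congrArg₂ (· + ·) (hc_sum x) (hc_sum y)
  have hc_smul : ∀ (a : R) x, c (a • x) = a • c x := by
    intro a x
    refine (hc_uniq (a • x) (a • c x) (fun i => ?_) ?_).symm
    · exact Submodule.smul_mem _ a (hc_mem x i)
    · rw [Finsupp.sum_smul_index' (fun _ => rfl), ← Finsupp.smul_sum]
      exact congrArg (a • ·) (hc_sum x)
  -- the projections onto the pieces
  set π : ι → U →ₗ[R] U := fun i =>
    { toFun := fun x => c x i
      map_add' := fun x y => by show c (x + y) i = c x i + c y i; rw [hc_add]; rfl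
      map_smul' := fun a x => by show c (a • x) i = a • c x i; rw [hc_smul]; rfl } with hπdef
  have hπ_mem : ∀ i x, π i x ∈ Usub i := fun i x => hc_mem x i
  have hπ_self : ∀ i, ∀ u ∈ Usub i, π i u = u := by
    intro i u hu
    have : Finsupp.single i u = c u := by
      refine hc_uniq u _ (fun j => ?_) ?_
      · rcases eq_or_ne j i with rfl | hne
        · simpa using hu
        · rw [Finsupp.single_eq_of_ne' (Ne.symm hne)]; exact zero_mem _
      · rw [Finsupp.sum_single_index rfl]
    simp only [hπdef, LinearMap.coe_mk, AddHom.coe_mk, ← this, Finsupp.single_eq_same]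
  have hπ_other : ∀ i j, i ≠ j → ∀ u ∈ Usub i, π j u = 0 := by
    intro i j hij u hu
    have : Finsupp.single i u = c u := by
      refine hc_uniq u _ (fun k => ?_) ?_
      · rcases eq_or_ne k i with rfl | hne
        · simpa using hu
        · rw [Finsupp.single_eq_of_ne' (Ne.symm hne)]; exact zero_mem _
      · rw [Finsupp.sum_single_index rfl]
    simp only [hπdef, LinearMap.coe_mk, AddHom.coe_mk, ← this,
      Finsupp.single_eq_of_ne' hij]
  -- the tensored projections
  set T2 : ι → (U ⊗[R] V) →ₗ[R] (U ⊗[R] V) := fun i => LinearMap.rTensor V (π i) with hT2def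
  have hT2_mem : ∀ i z, T2 i z ∈ W i := by
    intro i z
    induction z with
    | zero => simp
    | tmul u v =>
      rw [hT2def, LinearMap.rTensor_tmul, hW i]
      exact Submodule.subset_span ⟨π i u, hπ_mem i u, v, rfl⟩
    | add x y hx hy => rw [map_add]; exact add_mem hx hy
  have hT2_self : ∀ i, ∀ z ∈ W i, T2 i z = z := by
    intro i z hz
    rw [hW i] at hz
    induction hz using Submodule.span_induction with
    | mem x hx =>
      obtain ⟨u, hu, v, rfl⟩ := hx
      rw [hT2def, LinearMap.rTensor_tmul, hπ_self i u hu]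
    | zero => simp
    | add x y _ _ hx hy => rw [map_add, hx, hy]
    | smul a x _ hx => rw [map_smul, hx]
  have hT2_other : ∀ i j, i ≠ j → ∀ z ∈ W i, T2 j z = 0 := by
    intro i j hij z hz
    rw [hW i] at hz
    induction hz using Submodule.span_induction with
    | mem x hx =>
      obtain ⟨u, hu, v, rfl⟩ := hx
      rw [hT2def, LinearMap.rTensor_tmul, hπ_other i j hij u hu, zero_tmul]
    | zero => simp
    | add x y _ _ hx hy => rw [map_add, hx, hy, add_zero]
    | smul a x _ hx => rw [map_smul, hx, smul_zero]
  -- any decomposition is computed by the projections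
  have key : ∀ (z : U ⊗[R] V) (d : ι →₀ (U ⊗[R] V)), (∀ i, d i ∈ W i) →
      z = (d.sum fun _ v => v) → ∀ j, d j = T2 j z := by
    intro z d hmem hz j
    rw [hz, map_finsuppSum]
    rw [Finsupp.sum]
    rcases eq_or_ne (d j) 0 with h0 | h0
    · rw [h0, Finset.sum_eq_zero]
      intro i hi
      rcases eq_or_ne i j with rfl | hij
      · rw [hT2_self i _ (hmem i), h0]
      · exact hT2_other i j hij _ (hmem i)
    · rw [Finset.sum_eq_single j]
      · exact (hT2_self j _ (hmem j)).symm
      · intro i _ hij; exact hT2_other i j hij _ (hmem i)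
      · intro h; exact absurd (Finsupp.notMem_support_iff.mp h) h0
  -- vanishing of G across distinct pieces
  have hG0 : ∀ i j, i ≠ j → ∀ x ∈ W i, ∀ y ∈ W j, G x y = 0 := by
    intro i j hij x hx y hy
    rw [hW i] at hx; rw [hW j] at hy
    induction hx using Submodule.span_induction with
    | mem x hxm =>
      induction hy using Submodule.span_induction with
      | mem y hym =>
        obtain ⟨u, hu, v, rfl⟩ := hxm
        obtain ⟨u', hu', v', rfl⟩ := hym
        rw [hG, (horth i j hij).2 u hu u' hu', zero_mul]
      | zero => simp
      | add y₁ y₂ _ _ h1 h2 => rw [map_add, h1, h2, add_zero]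
      | smul a y _ h => rw [map_smul, h, smul_zero]
    | zero => simp
    | add x₁ x₂ _ _ h1 h2 => rw [map_add, LinearMap.add_apply, h1, h2, add_zero]
    | smul a x _ h => rw [map_smul, LinearMap.smul_apply, h, smul_zero]
  constructor
  · intro i j hij
    constructor
    · rw [eq_bot_iff]
      intro z hz
      have h1 : T2 i z = z := hT2_self i z hz.1
      have h2 : T2 i z = 0 := hT2_other j i (Ne.symm hij) z hz.2
      simpa [h1.symm.trans h2] using h2 ▸ h1.symm
    · intro x hx y hy
      simp only [htq, map_add, LinearMap.add_apply]
      rw [hG0 i j hij x hx y hy, hG0 j i (Ne.symm hij) y hy x hx]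
      ring
  · intro z
    -- existence of a decomposition
    have hex : ∃ d : ι →₀ (U ⊗[R] V), (∀ i, d i ∈ W i) ∧ z = d.sum fun _ v => v := by
      induction z with
      | zero => exact ⟨0, fun i => zero_mem _, by simp⟩
      | tmul u v =>
        refine ⟨(c u).mapRange (fun w => w ⊗ₜ[R] v) (zero_tmul _ _), fun i => ?_, ?_⟩
        · rw [Finsupp.mapRange_apply, hW i]
          exact Submodule.subset_span ⟨c u i, hc_mem u i, v, rfl⟩
        · rw [Finsupp.sum_mapRange_index (fun _ => rfl)]
          conv_lhs => rw [hc_sum u]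
          rw [Finsupp.sum, Finsupp.sum, TensorProduct.sum_tmul]
      | add x y hx hy =>
        obtain ⟨d₁, h1m, h1s⟩ := hx
        obtain ⟨d₂, h2m, h2s⟩ := hy
        refine ⟨d₁ + d₂, fun i => add_mem (h1m i) (h2m i), ?_⟩
        rw [Finsupp.sum_add_index' (fun _ => rfl) (fun _ _ _ => rfl), ← h1s, ← h2s]
    obtain ⟨d, hdm, hds⟩ := hex
    refine ⟨d, ⟨hdm, hds⟩, ?_⟩
    intro d' ⟨hdm', hds'⟩
    ext j
    rw [key z d' hdm' hds' j, key z d hdm hds j]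
end

section
/- Let R be a semiring in which R \ {0} is closed under addition and multiplication, and let (V1, b1), (V2, b2) be indecomposable free bilinear R-modules of rank ≥ 2 (not ⟨0⟩) with alternate forms (b_i(ε,ε) = 0 on base vectors). If V1 or V2 contains an odd cycle in its base with respect to b_i, then (V1 ⊗ V2, b1 ⊗ b2) is indecomposable; otherwise V1 ⊗ V2 is the orthogonal sum of exactly two indecomposable components. -/
open TensorProduct

/-- `B` is a base of the `R`-module `V`. -/
def IsBaseSet (R : Type*) [CommSemiring R] {V : Type*} [AddCommMonoid V] [Module R V]
    (B : Set V) : Prop :=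
  ∀ x : V, ∃! c : B →₀ R, x = c.sum fun b r => r • (b : V)

/-- The basic submodule with base `S` is indecomposable for the bilinear form `β`. -/
def BIndecompOn {R : Type*} [CommSemiring R] {V : Type*} [AddCommMonoid V] [Module R V]
    (β : V →ₗ[R] V →ₗ[R] R) (S : Set V) : Prop :=
  ¬ ∃ S₁ S₂ : Set V, S₁ ∪ S₂ = S ∧ Disjoint S₁ S₂ ∧ S₁.Nonempty ∧ S₂.Nonempty ∧
      Submodule.span R S₁ ⊓ Submodule.span R S₂ = ⊥ ∧
      ∀ x ∈ Submodule.span R S₁, ∀ y ∈ Submodule.span R S₂, β x y = 0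

/-- The base `B` contains an odd cycle with respect to (the alternation of) `β`. -/
def HasOddCycle {R : Type*} [CommSemiring R] {V : Type*} [AddCommMonoid V] [Module R V]
    (β : V →ₗ[R] V →ₗ[R] R) (B : Set V) : Prop :=
  ∃ (n : ℕ) (c : Fin (n + 1) → V), Odd n ∧ (∀ i, c i ∈ B) ∧ c 0 = c (Fin.last n) ∧
    ∀ i : Fin n, c i.castSucc ≠ c i.succ ∧ β (c i.castSucc) (c i.succ) ≠ 0

namespace Stmt18

variable {V : Type*}

/-- Walks of length `n` in the graph with edge relation `A`. -/
def Wk (A : V → V → Prop) (n : ℕ) (x y : V) : Prop :=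
  ∃ c : ℕ → V, c 0 = x ∧ c n = y ∧ ∀ i < n, A (c i) (c (i + 1))

theorem Wk.refl (A : V → V → Prop) (x : V) : Wk A 0 x x :=
  ⟨fun _ => x, rfl, rfl, fun i hi => absurd hi (Nat.not_lt_zero i)⟩

theorem Wk.eq_zero {A : V → V → Prop} {x y : V} (h : Wk A 0 x y) : x = y := by
  obtain ⟨c, h0, hn, -⟩ := h; rw [← h0, hn]

theorem Wk.single {A : V → V → Prop} {x y : V} (h : A x y) : Wk A 1 x y := by
  refine ⟨fun i => if i = 0 then x else y, by simp, by simp, ?_⟩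
  intro i hi
  interval_cases i
  simpa using h

theorem Wk.trans {A : V → V → Prop} {m n : ℕ} {x y z : V}
    (h1 : Wk A m x y) (h2 : Wk A n y z) : Wk A (m + n) x z := by
  obtain ⟨c, hc0, hcm, hce⟩ := h1
  obtain ⟨d, hd0, hdn, hde⟩ := h2
  refine ⟨fun i => if i < m then c i else d (i - m), ?_, ?_, ?_⟩
  · by_cases h : 0 < m
    · simpa [h] using hc0
    · have hm : m = 0 := by omega
      simp [hm] at hcm ⊢
      rw [hd0, ← hcm, hc0]
  · have : ¬ m + n < m := by omega
    simp [this, Nat.add_sub_cancel_left, hdn]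
  · intro i hi
    by_cases h1 : i + 1 < m
    · have h2 : i < m := by omega
      simp only [if_pos h1, if_pos h2]
      exact hce i h2
    · by_cases h2 : i < m
      · have him : i + 1 = m := by omega
        simp only [if_neg h1, if_pos h2]
        have : d (i + 1 - m) = c (i+1) := by rw [him, Nat.sub_self, hd0, ← hcm]
        rw [this]
        exact hce i h2
      · simp only [if_neg h1, if_neg h2]
        have : i + 1 - m = (i - m) + 1 := by omega
        rw [this]
        exact hde (i - m) (by omega)

theorem Wk.symm {A : V → V → Prop} (hA : ∀ a b, A a b → A b a) {n : ℕ} {x y : V}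
    (h : Wk A n x y) : Wk A n y x := by
  obtain ⟨c, hc0, hcn, hce⟩ := h
  refine ⟨fun i => c (n - i), by simp [hcn], by simp [hc0], ?_⟩
  intro i hi
  have h1 : n - i = (n - (i + 1)) + 1 := by omega
  simp only []
  rw [h1]
  exact hA _ _ (hce (n - (i + 1)) (by omega))

theorem Wk.uncons {A : V → V → Prop} {n : ℕ} {x y : V} (h : Wk A (n + 1) x y) :
    ∃ z, A x z ∧ Wk A n z y := by
  obtain ⟨c, hc0, hcn, hce⟩ := h
  exact ⟨c 1, hc0 ▸ hce 0 (by omega), fun i => c (i + 1), rfl, by simpa using hcn,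
    fun i hi => hce (i + 1) (by omega)⟩

theorem Wk.cons {A : V → V → Prop} {n : ℕ} {x z y : V} (h : A x z) (h2 : Wk A n z y) :
    Wk A (n + 1) x y := by
  simpa [Nat.add_comm] using (Wk.single h).trans h2

theorem Wk.pad {A : V → V → Prop} (hA : ∀ a b, A a b → A b a) {n : ℕ} {x y z : V}
    (hz : A x z) (h : Wk A n x y) : Wk A (n + 2) x y := by
  have : Wk A 2 x x := (Wk.single hz).trans (Wk.single (hA _ _ hz))
  simpa [Nat.add_comm] using this.trans h

theorem Wk.pad_many {A : V → V → Prop} (hA : ∀ a b, A a b → A b a) {n : ℕ} {x y z : V}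
    (hz : A x z) (h : Wk A n x y) (k : ℕ) : Wk A (n + 2 * k) x y := by
  induction k with
  | zero => simpa using h
  | succ k ih =>
      have := ih.pad hA hz
      have he : n + 2 * (k + 1) = n + 2 * k + 2 := by ring
      rwa [he]

theorem Wk.pad_to {A : V → V → Prop} (hA : ∀ a b, A a b → A b a) {n m : ℕ} {x y z : V}
    (hz : A x z) (h : Wk A n x y) (hle : n ≤ m) (hpar : n % 2 = m % 2) : Wk A m x y := by
  have : m = n + 2 * ((m - n) / 2) := by omega
  rw [this]
  exact h.pad_many hA hz _

/-- Restrict a walk to an adjacency-closed subset. -/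
theorem Wk.restrict {A A' : V → V → Prop} {C : Set V}
    (hstep : ∀ a b, a ∈ C → A a b → A' a b ∧ b ∈ C) :
    ∀ n x y, x ∈ C → Wk A n x y → Wk A' n x y := by
  intro n
  induction n with
  | zero => rintro x y hx ⟨c, h0, hn, -⟩; exact ⟨c, h0, hn, fun i hi => absurd hi (by omega)⟩
  | succ n ih =>
      intro x y hx hw
      obtain ⟨z, hxz, hw'⟩ := hw.uncons
      obtain ⟨hA', hzC⟩ := hstep _ _ hx hxz
      exact Wk.cons hA' (ih z y hzC hw')

/-- Two connected vertices admit walks of a common length, odd-cycle case. -/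
theorem common_length_odd {W : Type*} {A : V → V → Prop} {A' : W → W → Prop}
    (hA : ∀ a b, A a b → A b a) (hA' : ∀ a b, A' a b → A' b a)
    {x x' w zx : V} {y y' zy : W} {n a o m : ℕ}
    (hn : Wk A n x x') (ha : Wk A a x' w) (ho : Wk A o w w) (hodd : Odd o)
    (hm : Wk A' m y y') (hzx : A x zx) (hzy : A' y zy) :
    ∃ L, Wk A L x x' ∧ Wk A' L y y' := by
  have ho1 : o % 2 = 1 := Nat.odd_iff.1 hodd
  have w2 : Wk A (n + (a + (o + a))) x x' := hn.trans (ha.trans (ho.trans (ha.symm hA)))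
  refine ⟨m + 2 * (n + (a + (o + a))), ?_, hm.pad_to hA' hzy (by omega) (by omega)⟩
  by_cases hp : (m + 2 * (n + (a + (o + a)))) % 2 = n % 2
  · exact hn.pad_to hA hzx (by omega) (by omega)
  · exact w2.pad_to hA hzx (by omega) (by omega)

/-- Two connected vertices admit walks of a common length, equal-parity case. -/
theorem common_length_even {W : Type*} {A : V → V → Prop} {A' : W → W → Prop}
    (hA : ∀ a b, A a b → A b a) (hA' : ∀ a b, A' a b → A' b a)
    {x x' zx : V} {y y' zy : W} {p q : ℕ}
    (hp : Wk A p x x') (hq : Wk A' q y y') (hpar : p % 2 = q % 2)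
    (hzx : A x zx) (hzy : A' y zy) :
    ∃ L, Wk A L x x' ∧ Wk A' L y y' := by
  rcases le_total p q with h | h
  · exact ⟨q, hp.pad_to hA hzx h hpar, hq⟩
  · exact ⟨p, hp, hq.pad_to hA' hzy h hpar.symm⟩

section Mod

variable {R : Type*} [CommSemiring R] [AddCommMonoid V] [Module R V]

/-- The edge relation of a bilinear form on a base set. -/
def Ar (β : V →ₗ[R] V →ₗ[R] R) (B : Set V) (x y : V) : Prop :=
  x ∈ B ∧ y ∈ B ∧ β x y ≠ 0

theorem support_subset_of_mem_span {ι : Type*} (b : Module.Basis ι R V) {s : Set ι} {x : V}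
    (hx : x ∈ Submodule.span R (b '' s)) : ↑(b.repr x).support ⊆ s := by
  induction hx using Submodule.span_induction with
  | mem z hz =>
      obtain ⟨i, hi, rfl⟩ := hz
      rw [b.repr_self]
      exact (Finset.coe_subset.2 Finsupp.support_single_subset).trans (by simpa)
  | zero => simp
  | add u v _ _ hu hv =>
      classical
      rw [map_add]
      exact Set.Subset.trans (Finset.coe_subset.2 (Finsupp.support_add)) (by
        rw [Finset.coe_union]; exact Set.union_subset hu hv)
  | smul a u _ hu =>
      rw [map_smul]
      exact Set.Subset.trans (Finset.coe_subset.2 (Finsupp.support_smul)) hu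

theorem span_inf_bot {ι : Type*} (b : Module.Basis ι R V) {s t : Set ι} (hst : Disjoint s t) :
    Submodule.span R (b '' s) ⊓ Submodule.span R (b '' t) = ⊥ := by
  rw [eq_bot_iff]
  rintro x ⟨hx1, hx2⟩
  have h1 := support_subset_of_mem_span b hx1
  have h2 := support_subset_of_mem_span b hx2
  have : (b.repr x).support = ∅ := by
    rw [← Finset.coe_eq_empty, ← Set.subset_empty_iff]
    intro i hi
    exact (hst.le_bot ⟨h1 hi, h2 hi⟩)
  have hrepr : b.repr x = 0 := Finsupp.support_eq_empty.1 this
  have := congrArg b.repr.symm hrepr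
  rw [b.repr.symm_apply_apply, map_zero] at this
  simpa using this

/-- Disjoint subsets of the range of a basis have trivially intersecting spans. -/
theorem span_inf_bot_of_subset_range {ι : Type*} (b : Module.Basis ι R V) {S T : Set V}
    (hS : S ⊆ Set.range b) (hT : T ⊆ Set.range b) (hST : Disjoint S T) :
    Submodule.span R S ⊓ Submodule.span R T = ⊥ := by
  have hS' : S = b '' (b ⁻¹' S) := by
    rw [Set.image_preimage_eq_inter_range]; exact (Set.inter_eq_left.2 hS).symm
  have hT' : T = b '' (b ⁻¹' T) := by
    rw [Set.image_preimage_eq_inter_range]; exact (Set.inter_eq_left.2 hT).symm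
  rw [hS', hT']
  exact span_inf_bot b (fun u hu1 hu2 => by
    intro i hi
    exact absurd (hST.le_bot ⟨hu1 hi, hu2 hi⟩) (by simp))

/-- Pairwise orthogonality extends to spans. -/
theorem orth_span (β : V →ₗ[R] V →ₗ[R] R) {S T : Set V}
    (h : ∀ x ∈ S, ∀ y ∈ T, β x y = 0) :
    ∀ x ∈ Submodule.span R S, ∀ y ∈ Submodule.span R T, β x y = 0 := by
  have step1 : ∀ x ∈ S, ∀ y ∈ Submodule.span R T, β x y = 0 := by
    intro x hx y hy
    have : Submodule.span R T ≤ LinearMap.ker (β x) :=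
      Submodule.span_le.2 fun z hz => h x hx z hz
    exact this hy
  intro x hx y hy
  have : Submodule.span R S ≤ LinearMap.ker (β.flip y) :=
    Submodule.span_le.2 fun z hz => step1 z hz y hy
  exact this hx

/-- From `IsBaseSet` build a `Basis` whose vectors are the inclusion. -/
noncomputable def baseBasis {B : Set V}
    (hB : ∀ x : V, ∃! c : B →₀ R, x = c.sum fun b r => r • (b : V)) : Module.Basis B R V := by
  let F : (B →₀ R) →ₗ[R] V := Finsupp.linearCombination R (fun b : B => (b : V))
  have hFapp : ∀ c : B →₀ R, F c = c.sum fun b r => r • (b : V) := fun c =>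
    Finsupp.linearCombination_apply _ _
  have hbij : Function.Bijective F := by
    constructor
    · intro c c' hcc
      obtain ⟨d, hd, hu⟩ := hB (F c)
      have h1 : c = d := hu c (hFapp c).symm
      have h2 : c' = d := hu c' (show F c = _ by rw [hcc]; exact hFapp c')
      rw [h1, h2]
    · intro x
      obtain ⟨c, hc, -⟩ := hB x
      exact ⟨c, by rw [hFapp]; exact hc.symm⟩
  exact Module.Basis.ofRepr (LinearEquiv.ofBijective F hbij).symm

theorem baseBasis_apply {B : Set V}
    (hB : ∀ x : V, ∃! c : B →₀ R, x = c.sum fun b r => r • (b : V)) (i : B) :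
    baseBasis hB i = (i : V) := by
  unfold baseBasis
  simp only [Module.Basis.coe_ofRepr]
  rw [LinearEquiv.symm_symm]
  change (LinearEquiv.ofBijective _ _) (Finsupp.single i 1) = _
  change Finsupp.linearCombination R (fun b : B => (b : V)) (Finsupp.single i 1) = _
  simp [Finsupp.linearCombination_single]

theorem baseBasis_range {B : Set V}
    (hB : ∀ x : V, ∃! c : B →₀ R, x = c.sum fun b r => r • (b : V)) :
    Set.range (baseBasis hB) = B := by
  ext x
  constructor
  · rintro ⟨i, rfl⟩; rw [baseBasis_apply]; exact i.2
  · intro hx; exact ⟨⟨x, hx⟩, baseBasis_apply hB _⟩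

/-- Connectivity kills decompositions. -/
theorem indecompOn_of_conn (β : V →ₗ[R] V →ₗ[R] R) (S : Set V) (A : V → V → Prop)
    (hA : ∀ x y, A x y → x ∈ S ∧ y ∈ S ∧ β x y ≠ 0)
    (hconn : ∀ x ∈ S, ∀ y ∈ S, ∃ n, Wk A n x y) :
    ¬ ∃ S₁ S₂ : Set V, S₁ ∪ S₂ = S ∧ Disjoint S₁ S₂ ∧ S₁.Nonempty ∧ S₂.Nonempty ∧
      Submodule.span R S₁ ⊓ Submodule.span R S₂ = ⊥ ∧
      ∀ x ∈ Submodule.span R S₁, ∀ y ∈ Submodule.span R S₂, β x y = 0 := by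
  rintro ⟨S₁, S₂, hunion, hdisj, ⟨s, hs⟩, ⟨t, ht⟩, -, horth⟩
  have hsS : s ∈ S := hunion ▸ Set.mem_union_left _ hs
  have htS : t ∈ S := hunion ▸ Set.mem_union_right _ ht
  obtain ⟨n, hw⟩ := hconn s hsS t htS
  have key : ∀ n x y, x ∈ S₁ → Wk A n x y → y ∈ S₁ := by
    intro n
    induction n with
    | zero => rintro x y hx hw; rwa [← hw.eq_zero]
    | succ n ih =>
        intro x y hx hw
        obtain ⟨z, hxz, hw'⟩ := hw.uncons
        obtain ⟨-, hzS, hβ⟩ := hA _ _ hxz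
        have hz1 : z ∈ S₁ := by
          rcases (hunion ▸ hzS : z ∈ S₁ ∪ S₂) with h | h
          · exact h
          · exact absurd (horth x (Submodule.subset_span hx) z (Submodule.subset_span h)) hβ
        exact ih z y hz1 hw'
  exact (Set.disjoint_left.1 hdisj (key n s t hs hw)) ht

/-- Indecomposability forces connectivity (given a basis whose range is the base). -/
theorem conn_of_indecompOn {ι : Type*} (b : Module.Basis ι R V) (β : V →ₗ[R] V →ₗ[R] R) (B : Set V)
    (hrange : Set.range b = B)
    (hind : ¬ ∃ S₁ S₂ : Set V, S₁ ∪ S₂ = B ∧ Disjoint S₁ S₂ ∧ S₁.Nonempty ∧ S₂.Nonempty ∧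
      Submodule.span R S₁ ⊓ Submodule.span R S₂ = ⊥ ∧
      ∀ x ∈ Submodule.span R S₁, ∀ y ∈ Submodule.span R S₂, β x y = 0) :
    ∀ x ∈ B, ∀ y ∈ B, ∃ n, Wk (Ar β B) n x y := by
  intro x hx y hy
  by_contra hcon
  apply hind
  refine ⟨{u ∈ B | ∃ n, Wk (Ar β B) n x u}, {u ∈ B | ¬ ∃ n, Wk (Ar β B) n x u},
    ?_, ?_, ?_, ?_, ?_, ?_⟩
  · ext u
    constructor
    · rintro (⟨h, -⟩ | ⟨h, -⟩) <;> exact h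
    · intro hu; by_cases h : ∃ n, Wk (Ar β B) n x u
      · exact Or.inl ⟨hu, h⟩
      · exact Or.inr ⟨hu, h⟩
  · rw [Set.disjoint_left]; rintro u ⟨-, h⟩ ⟨-, h'⟩; exact h' h
  · exact ⟨x, hx, 0, Wk.refl _ x⟩
  · exact ⟨y, hy, hcon⟩
  · exact span_inf_bot_of_subset_range b (fun u hu => hrange ▸ hu.1) (fun u hu => hrange ▸ hu.1)
      (Set.disjoint_left.2 (fun u hu hu' => hu'.2 hu.2))
  · refine orth_span β ?_
    rintro u ⟨huB, n, hwn⟩ v ⟨hvB, hnv⟩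
    by_contra hβ
    exact hnv ⟨n + 1, hwn.trans (Wk.single ⟨huB, hvB, hβ⟩)⟩

/-- Every vertex of a connected nontrivial base has a neighbour. -/
theorem exists_neighbor {A : V → V → Prop} {B : Set V}
    (hconn : ∀ x ∈ B, ∀ y ∈ B, ∃ n, Wk A n x y) (hnt : B.Nontrivial) {x : V} (hx : x ∈ B) :
    ∃ z, A x z := by
  obtain ⟨a, ha, b, hb, hab⟩ := hnt
  have : ∃ y ∈ B, y ≠ x := by
    by_cases h : a = x
    · exact ⟨b, hb, fun hbx => hab (h.trans hbx.symm)⟩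
    · exact ⟨a, ha, h⟩
  obtain ⟨y, hy, hyx⟩ := this
  obtain ⟨n, hw⟩ := hconn x hx y hy
  match n, hw with
  | 0, hw => exact absurd hw.eq_zero (fun h => hyx h.symm)
  | (n+1), hw =>
      obtain ⟨z, hz, -⟩ := hw.uncons
      exact ⟨z, hz⟩

/-- An odd cycle yields an odd closed walk. -/
theorem oddWalk_of_hasOddCycle {β : V →ₗ[R] V →ₗ[R] R} {B : Set V}
    (h : HasOddCycle β B) : ∃ x ∈ B, ∃ o, Odd o ∧ Wk (Ar β B) o x x := by
  obtain ⟨n, c, hodd, hmem, hcl, hedge⟩ := h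
  refine ⟨c 0, hmem 0, n, hodd, fun i => c ⟨min i n, by omega⟩, ?_, ?_, ?_⟩
  · show c ⟨min 0 n, by omega⟩ = c 0
    have : (⟨min 0 n, by omega⟩ : Fin (n+1)) = 0 := by ext; simp
    rw [this]
  · show c ⟨min n n, by omega⟩ = c 0
    have : (⟨min n n, by omega⟩ : Fin (n+1)) = Fin.last n := by ext; simp
    rw [this, ← hcl]
  · intro i hi
    have e1 : (⟨min i n, by omega⟩ : Fin (n+1)) = (⟨i, hi⟩ : Fin n).castSucc := by
      ext; simp [Fin.castSucc]; omega
    have e2 : (⟨min (i+1) n, by omega⟩ : Fin (n+1)) = (⟨i, hi⟩ : Fin n).succ := by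
      ext; simp [Fin.succ]; omega
    show Stmt18.Ar β B (c ⟨min i n, by omega⟩) (c ⟨min (i+1) n, by omega⟩)
    rw [e1, e2]
    exact ⟨hmem _, hmem _, (hedge ⟨i, hi⟩).2⟩

/-- An odd closed walk yields an odd cycle (alternation gives distinctness). -/
theorem hasOddCycle_of_oddWalk {β : V →ₗ[R] V →ₗ[R] R} {B : Set V}
    (halt : ∀ x ∈ B, β x x = 0) {x : V} {o : ℕ}
    (hx : x ∈ B) (hodd : Odd o) (hw : Wk (Ar β B) o x x) : HasOddCycle β B := by
  obtain ⟨c, h0, hn, he⟩ := hw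
  refine ⟨o, fun i => c i.val, hodd, ?_, ?_, ?_⟩
  · intro i
    by_cases h : (i : ℕ) < o
    · exact (he i h).1
    · have : (i : ℕ) = o := by omega
      simp only [this, hn]
      exact hx
  · simp [Fin.val_zero, Fin.val_last, h0, hn]
  · intro i
    have hedge := he i.val i.isLt
    have hv1 : ((i.castSucc : Fin (o+1)) : ℕ) = i.val := rfl
    have hv2 : ((i.succ : Fin (o+1)) : ℕ) = i.val + 1 := rfl
    simp only [hv1, hv2]
    constructor
    · intro hc
      apply hedge.2.2
      rw [← hc]
      exact halt _ hedge.1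
    · exact hedge.2.2

end Mod
end Stmt18

/-- Over a semiring `R` with `R \ {0}` closed under addition and
multiplication, let `(V₁, b₁)` and `(V₂, b₂)` be indecomposable free bilinear modules of
rank ≥ 2 with alternate forms.  If `V₁` or `V₂` contains an odd cycle then
`(V₁ ⊗ V₂, b₁ ⊗ b₂)` is indecomposable; otherwise `V₁ ⊗ V₂` is the orthogonal sum of
exactly two indecomposable components. -/
theorem tensor_alternate_indecomposable {R : Type*} [CommSemiring R]
    (hadd : ∀ a b : R, a + b = 0 → a = 0 ∧ b = 0)
    (hmul : ∀ a b : R, a * b = 0 → a = 0 ∨ b = 0)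
    {V₁ V₂ : Type*} [AddCommMonoid V₁] [Module R V₁] [AddCommMonoid V₂] [Module R V₂]
    (B₁ : Set V₁) (hB₁ : IsBaseSet R B₁) (B₂ : Set V₂) (hB₂ : IsBaseSet R B₂)
    (b₁ : V₁ →ₗ[R] V₁ →ₗ[R] R) (b₂ : V₂ →ₗ[R] V₂ →ₗ[R] R)
    (hsymm₁ : ∀ x y, b₁ x y = b₁ y x) (hsymm₂ : ∀ x y, b₂ x y = b₂ y x)
    (halt₁ : ∀ x ∈ B₁, b₁ x x = 0) (halt₂ : ∀ y ∈ B₂, b₂ y y = 0)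
    (hrank₁ : B₁.Nontrivial) (hrank₂ : B₂.Nontrivial)
    (hind₁ : BIndecompOn b₁ B₁) (hind₂ : BIndecompOn b₂ B₂)
    (G : V₁ ⊗[R] V₂ →ₗ[R] V₁ ⊗[R] V₂ →ₗ[R] R)
    (hG : ∀ (x₁ x₂ : V₁) (y₁ y₂ : V₂),
      G (x₁ ⊗ₜ[R] y₁) (x₂ ⊗ₜ[R] y₂) = b₁ x₁ x₂ * b₂ y₁ y₂)
    (TB : Set (V₁ ⊗[R] V₂))
    (hTB : TB = {z | ∃ x ∈ B₁, ∃ y ∈ B₂, z = x ⊗ₜ[R] y}) :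
    ((HasOddCycle b₁ B₁ ∨ HasOddCycle b₂ B₂) → BIndecompOn G TB) ∧
    (¬ (HasOddCycle b₁ B₁ ∨ HasOddCycle b₂ B₂) →
      ∃ C₁ C₂ : Set (V₁ ⊗[R] V₂), C₁ ∪ C₂ = TB ∧ Disjoint C₁ C₂ ∧
        C₁.Nonempty ∧ C₂.Nonempty ∧
        Submodule.span R C₁ ⊓ Submodule.span R C₂ = ⊥ ∧
        (∀ x ∈ Submodule.span R C₁, ∀ y ∈ Submodule.span R C₂, G x y = 0) ∧
        BIndecompOn G C₁ ∧ BIndecompOn G C₂) := by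
  classical
  open Stmt18 in
  -- `R` is nontrivial since `B₁` has two elements
  haveI hntR : Nontrivial R := by
    by_contra h
    rw [not_nontrivial_iff_subsingleton] at h
    obtain ⟨a, _, b, _, hab⟩ := hrank₁
    apply hab
    have hz : ∀ v : V₁, v = 0 := fun v => by
      calc v = (1 : R) • v := (one_smul R v).symm
        _ = (0 : R) • v := by rw [Subsingleton.elim (1 : R) 0]
        _ = 0 := zero_smul R v
    rw [hz a, hz b]
  -- bases
  let bb₁ : Module.Basis B₁ R V₁ := Stmt18.baseBasis hB₁
  let bb₂ : Module.Basis B₂ R V₂ := Stmt18.baseBasis hB₂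
  let bT : Module.Basis (↥B₁ × ↥B₂) R (V₁ ⊗[R] V₂) := bb₁.tensorProduct bb₂
  have hbTapp : ∀ (i : B₁) (j : B₂), bT (i, j) = (i : V₁) ⊗ₜ[R] (j : V₂) := by
    intro i j
    show bb₁.tensorProduct bb₂ (i, j) = _
    rw [Module.Basis.tensorProduct_apply]
    exact congrArg₂ _ (Stmt18.baseBasis_apply hB₁ i) (Stmt18.baseBasis_apply hB₂ j)
  have hbTrange : Set.range bT = TB := by
    ext z
    rw [hTB]
    constructor
    · rintro ⟨⟨i, j⟩, rfl⟩
      exact ⟨i, i.2, j, j.2, (hbTapp i j)⟩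
    · rintro ⟨x, hx, y, hy, rfl⟩
      exact ⟨(⟨x, hx⟩, ⟨y, hy⟩), hbTapp _ _⟩
  have hinj : ∀ {ε ε' : V₁} {η η' : V₂}, ε ∈ B₁ → ε' ∈ B₁ → η ∈ B₂ → η' ∈ B₂ →
      ε ⊗ₜ[R] η = ε' ⊗ₜ[R] η' → ε = ε' ∧ η = η' := by
    intro ε ε' η η' hε hε' hη hη' h
    have := bT.injective (a₁ := (⟨ε, hε⟩, ⟨η, hη⟩)) (a₂ := (⟨ε', hε'⟩, ⟨η', hη'⟩))
      (by rw [hbTapp, hbTapp]; exact h)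
    rw [Prod.mk.injEq, Subtype.mk.injEq, Subtype.mk.injEq] at this
    exact this
  -- edge relations
  have hsymA₁ : ∀ a b, Ar b₁ B₁ a b → Ar b₁ B₁ b a := by
    rintro a b ⟨h1, h2, h3⟩
    exact ⟨h2, h1, by rw [← hsymm₁]; exact h3⟩
  have hsymA₂ : ∀ a b, Ar b₂ B₂ a b → Ar b₂ B₂ b a := by
    rintro a b ⟨h1, h2, h3⟩
    exact ⟨h2, h1, by rw [← hsymm₂]; exact h3⟩
  have hconn₁ : ∀ x ∈ B₁, ∀ y ∈ B₁, ∃ n, Wk (Ar b₁ B₁) n x y :=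
    Stmt18.conn_of_indecompOn bb₁ b₁ B₁ (Stmt18.baseBasis_range hB₁) hind₁
  have hconn₂ : ∀ x ∈ B₂, ∀ y ∈ B₂, ∃ n, Wk (Ar b₂ B₂) n x y :=
    Stmt18.conn_of_indecompOn bb₂ b₂ B₂ (Stmt18.baseBasis_range hB₂) hind₂
  have hnb₁ : ∀ x ∈ B₁, ∃ z, Ar b₁ B₁ x z := fun x hx =>
    Stmt18.exists_neighbor hconn₁ hrank₁ hx
  have hnb₂ : ∀ y ∈ B₂, ∃ z, Ar b₂ B₂ y z := fun y hy =>
    Stmt18.exists_neighbor hconn₂ hrank₂ hy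
  -- tensor walks from component walks
  have htw : ∀ n (x x' : V₁) (y y' : V₂), x ∈ B₁ → y ∈ B₂ →
      Wk (Ar b₁ B₁) n x x' → Wk (Ar b₂ B₂) n y y' →
      Wk (Ar G TB) n (x ⊗ₜ[R] y) (x' ⊗ₜ[R] y') := by
    intro n
    induction n with
    | zero =>
        intro x x' y y' _ _ h1 h2
        rw [← h1.eq_zero, ← h2.eq_zero]
        exact Wk.refl _ _
    | succ n ih =>
        intro x x' y y' hx hy h1 h2
        obtain ⟨z₁, hxz₁, h1'⟩ := h1.uncons
        obtain ⟨z₂, hyz₂, h2'⟩ := h2.uncons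
        refine Wk.cons ⟨?_, ?_, ?_⟩ (ih z₁ x' z₂ y' hxz₁.2.1 hyz₂.2.1 h1' h2')
        · rw [hTB]; exact ⟨x, hx, y, hy, rfl⟩
        · rw [hTB]; exact ⟨z₁, hxz₁.2.1, z₂, hyz₂.2.1, rfl⟩
        · rw [hG]
          intro h0
          rcases hmul _ _ h0 with h | h
          · exact hxz₁.2.2 h
          · exact hyz₂.2.2 h
  constructor
  · -- odd cycle case: indecomposable
    intro hodd
    refine Stmt18.indecompOn_of_conn G TB (Ar G TB) (fun _ _ h => h) ?_
    intro z hz z' hz'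
    rw [hTB] at hz hz'
    obtain ⟨ε, hε, η, hη, rfl⟩ := hz
    obtain ⟨ε', hε', η', hη', rfl⟩ := hz'
    obtain ⟨n, hwn⟩ := hconn₁ ε hε ε' hε'
    obtain ⟨m, hwm⟩ := hconn₂ η hη η' hη'
    obtain ⟨zx, hzx⟩ := hnb₁ ε hε
    obtain ⟨zy, hzy⟩ := hnb₂ η hη
    rcases hodd with h1 | h2
    · obtain ⟨w, hw, o, ho, holw⟩ := Stmt18.oddWalk_of_hasOddCycle h1
      obtain ⟨a, haw⟩ := hconn₁ ε' hε' w hw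
      obtain ⟨L, hL1, hL2⟩ := Stmt18.common_length_odd hsymA₁ hsymA₂ hwn haw holw ho hwm hzx hzy
      exact ⟨L, htw L _ _ _ _ hε hη hL1 hL2⟩
    · obtain ⟨w, hw, o, ho, holw⟩ := Stmt18.oddWalk_of_hasOddCycle h2
      obtain ⟨a, haw⟩ := hconn₂ η' hη' w hw
      obtain ⟨L, hL1, hL2⟩ := Stmt18.common_length_odd hsymA₂ hsymA₁ hwm haw holw ho hwn hzy hzx
      exact ⟨L, htw L _ _ _ _ hε hη hL2 hL1⟩
  · -- bipartite case: two components
    intro hno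
    have hno₁ : ¬ HasOddCycle b₁ B₁ := fun h => hno (Or.inl h)
    have hno₂ : ¬ HasOddCycle b₂ B₂ := fun h => hno (Or.inr h)
    have hpar₁ : ∀ x ∈ B₁, ∀ y (n n' : ℕ), Wk (Ar b₁ B₁) n x y → Wk (Ar b₁ B₁) n' x y →
        n % 2 = n' % 2 := by
      intro x hx y n n' h h'
      by_contra hc
      exact hno₁ (Stmt18.hasOddCycle_of_oddWalk halt₁ hx (Nat.odd_iff.2 (by omega))
        (h.trans (h'.symm hsymA₁)))
    have hpar₂ : ∀ x ∈ B₂, ∀ y (n n' : ℕ), Wk (Ar b₂ B₂) n x y → Wk (Ar b₂ B₂) n' x y →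
        n % 2 = n' % 2 := by
      intro x hx y n n' h h'
      by_contra hc
      exact hno₂ (Stmt18.hasOddCycle_of_oddWalk halt₂ hx (Nat.odd_iff.2 (by omega))
        (h.trans (h'.symm hsymA₂)))
    obtain ⟨ε₀, hε₀, -, -, -⟩ := hrank₁
    obtain ⟨η₀, hη₀, -, -, -⟩ := hrank₂
    -- the two colour classes
    set Cl : ℕ → Set (V₁ ⊗[R] V₂) := fun p =>
      {z | ∃ ε, ε ∈ B₁ ∧ ∃ η, η ∈ B₂ ∧ ∃ n m : ℕ, Wk (Ar b₁ B₁) n ε₀ ε ∧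
        Wk (Ar b₂ B₂) m η₀ η ∧ (n + m) % 2 = p ∧ z = ε ⊗ₜ[R] η} with hCl
    have hmemCl : ∀ p z, z ∈ Cl p ↔ (∃ ε, ε ∈ B₁ ∧ ∃ η, η ∈ B₂ ∧ ∃ n m : ℕ,
        Wk (Ar b₁ B₁) n ε₀ ε ∧ Wk (Ar b₂ B₂) m η₀ η ∧ (n + m) % 2 = p ∧ z = ε ⊗ₜ[R] η) :=
      fun p z => by rw [hCl]; exact Iff.rfl
    have hClTB : ∀ p, Cl p ⊆ TB := by
      intro p z hz
      obtain ⟨ε, hε, η, hη, n, m, -, -, -, rfl⟩ := (hmemCl p z).1 hz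
      rw [hTB]
      exact ⟨ε, hε, η, hη, rfl⟩
    have hclosure : ∀ p z z', z ∈ Cl p → z' ∈ TB → G z z' ≠ 0 → z' ∈ Cl p := by
      rintro p z z' hzmem hz' hGz
      obtain ⟨ε, hε, η, hη, n, m, hwn, hwm, hp, rfl⟩ := (hmemCl p z).1 hzmem
      rw [hTB] at hz'
      obtain ⟨ε', hε', η', hη', rfl⟩ := hz'
      rw [hG] at hGz
      have hb1 : b₁ ε ε' ≠ 0 := fun h => hGz (by rw [h, zero_mul])
      have hb2 : b₂ η η' ≠ 0 := fun h => hGz (by rw [h, mul_zero])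
      exact (hmemCl p _).2 ⟨ε', hε', η', hη', n + 1, m + 1,
        hwn.trans (Wk.single ⟨hε, hε', hb1⟩), hwm.trans (Wk.single ⟨hη, hη', hb2⟩),
        by omega, rfl⟩
    have hdisjC : Disjoint (Cl 0) (Cl 1) := by
      rw [Set.disjoint_left]
      intro z hz0 hz1
      obtain ⟨ε, hε, η, hη, n, m, hwn, hwm, hp, rfl⟩ := (hmemCl 0 z).1 hz0
      obtain ⟨ε', hε', η', hη', n', m', hwn', hwm', hp', heq⟩ := (hmemCl 1 _).1 hz1
      obtain ⟨he1, he2⟩ := hinj hε' hε hη' hη heq.symm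
      have q1 := hpar₁ ε₀ hε₀ ε n n' hwn (he1 ▸ hwn')
      have q2 := hpar₂ η₀ hη₀ η m m' hwm (he2 ▸ hwm')
      omega
    have hunion : Cl 0 ∪ Cl 1 = TB := by
      ext z
      constructor
      · rintro (h | h)
        · exact hClTB 0 h
        · exact hClTB 1 h
      · intro hz
        rw [hTB] at hz
        obtain ⟨ε, hε, η, hη, rfl⟩ := hz
        obtain ⟨n, hwn⟩ := hconn₁ ε₀ hε₀ ε hε
        obtain ⟨m, hwm⟩ := hconn₂ η₀ hη₀ η hη
        by_cases hp : (n + m) % 2 = 0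
        · exact Or.inl ((hmemCl 0 _).2 ⟨ε, hε, η, hη, n, m, hwn, hwm, hp, rfl⟩)
        · exact Or.inr ((hmemCl 1 _).2 ⟨ε, hε, η, hη, n, m, hwn, hwm, by omega, rfl⟩)
    have horthCl : ∀ z ∈ Cl 0, ∀ z' ∈ Cl 1, G z z' = 0 := by
      intro z hz z' hz'
      by_contra h
      exact Set.disjoint_left.1 hdisjC (hclosure 0 z z' hz (hClTB 1 hz') h) hz'
    -- connectivity within each colour class
    have hCconn : ∀ p, ∀ z ∈ Cl p, ∀ z' ∈ Cl p,
        ∃ L, Wk (fun a b => a ∈ Cl p ∧ b ∈ Cl p ∧ G a b ≠ 0) L z z' := by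
      rintro p z hz z' hz'
      obtain ⟨ε, hε, η, hη, n, m, hwn, hwm, hp, rfl⟩ := (hmemCl p z).1 hz
      obtain ⟨ε', hε', η', hη', n', m', hwn', hwm', hp', rfl⟩ := (hmemCl p z').1 hz'
      have w1 : Wk (Ar b₁ B₁) (n + n') ε ε' := (hwn.symm hsymA₁).trans hwn'
      have w2 : Wk (Ar b₂ B₂) (m + m') η η' := (hwm.symm hsymA₂).trans hwm'
      obtain ⟨zx, hzx⟩ := hnb₁ ε hε
      obtain ⟨zy, hzy⟩ := hnb₂ η hη
      obtain ⟨L, hL1, hL2⟩ := Stmt18.common_length_even hsymA₁ hsymA₂ w1 w2 (by omega) hzx hzy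
      have hwT : Wk (Ar G TB) L (ε ⊗ₜ[R] η) (ε' ⊗ₜ[R] η') := htw L _ _ _ _ hε hη hL1 hL2
      refine ⟨L, Wk.restrict ?_ L _ _ ((hmemCl p _).2 ⟨ε, hε, η, hη, n, m, hwn, hwm, hp, rfl⟩) hwT⟩
      rintro a b ha ⟨-, hbTB, hab⟩
      have hb : b ∈ Cl p := hclosure p a b ha hbTB hab
      exact ⟨⟨ha, hb, hab⟩, hb⟩
    obtain ⟨ε₁, hA₀₁⟩ := hnb₁ ε₀ hε₀
    refine ⟨Cl 0, Cl 1, hunion, hdisjC,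
      ⟨ε₀ ⊗ₜ[R] η₀, (hmemCl 0 _).2 ⟨ε₀, hε₀, η₀, hη₀, 0, 0, Wk.refl _ _, Wk.refl _ _, by omega, rfl⟩⟩,
      ⟨ε₁ ⊗ₜ[R] η₀, (hmemCl 1 _).2 ⟨ε₁, hA₀₁.2.1, η₀, hη₀, 1, 0, Wk.single hA₀₁, Wk.refl _ _, by omega, rfl⟩⟩,
      ?_, ?_, ?_, ?_⟩
    · exact Stmt18.span_inf_bot_of_subset_range bT
        (fun u hu => hbTrange ▸ hClTB 0 hu) (fun u hu => hbTrange ▸ hClTB 1 hu) hdisjC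
    · exact Stmt18.orth_span G horthCl
    · exact Stmt18.indecompOn_of_conn G (Cl 0) _ (fun _ _ h => h) (hCconn 0)
    · exact Stmt18.indecompOn_of_conn G (Cl 1) _ (fun _ _ h => h) (hCconn 1)
end
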